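/- arXiv:2202.11371 — 4 statements merged into one kernel-verified Lean document; each statement's English description precedes it below -/
import Mathlib

section
/- With boundary data P₀, P₁, unit tangents t₀, t₁, curvatures κ₀, κ₁, and β₀ = β₁ = 0, α₁ = ±λα₀ (λ > 0 fixed), the length-constraint function e(α₀) := |U² − V| − |U|² + v, where U, V, v are given in terms of the preimage coefficients, is an even function of α₀, and e(0) = (140/13)·(|P₁ − P₀| − L). -/
open Complex

/-- The square root `χ(c)` from Lemma 1. -/
noncomputable def chi (c : ℂ) : ℂ :=
  (Real.sqrt 2 / 2 : ℝ) *
    ((Real.sqrt (‖c‖ + c.re) : ℂ) +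
      Complex.I * ((c.im : ℂ) / (Real.sqrt (‖c‖ + c.re) : ℂ)))

/-- The length-constraint residual `e(α₀,α₁,β₀,β₁) = |U²−V| − |U|² + v` of the degree-7
`C³` PH biarc interpolant. -/
noncomputable def lengthResidual (P₀ P₁ t₀ t₁ : ℂ) (κ₀ κ₁ L α₀ α₁ β₀ β₁ : ℝ) : ℝ :=
  let wA0 : ℂ := (α₀ : ℂ) * chi t₀
  let wB3 : ℂ := (α₁ : ℂ) * chi t₁
  let wA1 : ℂ := (((α₀ ^ 2 + β₀ / 12 : ℝ) : ℂ) * t₀ +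
      ((κ₀ : ℂ) * ((α₀ ^ 4 / 12 : ℝ) : ℂ)) * (Complex.I * t₀)) / wA0
  let wB2 : ℂ := (((α₁ ^ 2 - β₁ / 12 : ℝ) : ℂ) * t₁ -
      ((κ₁ : ℂ) * ((α₁ ^ 4 / 12 : ℝ) : ℂ)) * (Complex.I * t₁)) / wB3
  let U : ℂ := (5 * (wA0 + wB3) + 39 * (wA1 + wB2)) / 52
  let V : ℂ := (40 * (wA0 ^ 2 + wB3 ^ 2) + 49 * (wA0 * wA1 + wB2 * wB3) +
      62 * (wA1 ^ 2 + wB2 ^ 2) + wA0 * wB2 + wA1 * wB3 + 28 * wA1 * wB2 -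
      560 * (P₁ - P₀)) / 52
  let v : ℝ := (40 * ‖wA0‖ ^ 2 + 40 * ‖wB3‖ ^ 2 +
      62 * ‖wA1‖ ^ 2 + 62 * ‖wB2‖ ^ 2 +
      (49 * (wA0 * starRingEnd ℂ wA1) + 49 * (wB2 * starRingEnd ℂ wB3) +
        28 * (wA1 * starRingEnd ℂ wB2) + wA0 * starRingEnd ℂ wB2 +
        wA1 * starRingEnd ℂ wB3).re - 560 * L) / 52
  ‖U ^ 2 - V‖ - ‖U‖ ^ 2 + v

/-- The residual as a function of the four preimage coefficients. -/
noncomputable def residTail (P₀ P₁ : ℂ) (L : ℝ) (wA0 wA1 wB2 wB3 : ℂ) : ℝ :=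
  let U : ℂ := (5 * (wA0 + wB3) + 39 * (wA1 + wB2)) / 52
  let V : ℂ := (40 * (wA0 ^ 2 + wB3 ^ 2) + 49 * (wA0 * wA1 + wB2 * wB3) +
      62 * (wA1 ^ 2 + wB2 ^ 2) + wA0 * wB2 + wA1 * wB3 + 28 * wA1 * wB2 -
      560 * (P₁ - P₀)) / 52
  let v : ℝ := (40 * ‖wA0‖ ^ 2 + 40 * ‖wB3‖ ^ 2 +
      62 * ‖wA1‖ ^ 2 + 62 * ‖wB2‖ ^ 2 +
      (49 * (wA0 * starRingEnd ℂ wA1) + 49 * (wB2 * starRingEnd ℂ wB3) +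
        28 * (wA1 * starRingEnd ℂ wB2) + wA0 * starRingEnd ℂ wB2 +
        wA1 * starRingEnd ℂ wB3).re - 560 * L) / 52
  ‖U ^ 2 - V‖ - ‖U‖ ^ 2 + v

lemma lengthResidual_eq_tail (P₀ P₁ t₀ t₁ : ℂ) (κ₀ κ₁ L α₀ α₁ β₀ β₁ : ℝ) :
    lengthResidual P₀ P₁ t₀ t₁ κ₀ κ₁ L α₀ α₁ β₀ β₁ =
      residTail P₀ P₁ L ((α₀ : ℂ) * chi t₀)
        ((((α₀ ^ 2 + β₀ / 12 : ℝ) : ℂ) * t₀ +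
          ((κ₀ : ℂ) * ((α₀ ^ 4 / 12 : ℝ) : ℂ)) * (Complex.I * t₀)) / ((α₀ : ℂ) * chi t₀))
        ((((α₁ ^ 2 - β₁ / 12 : ℝ) : ℂ) * t₁ -
          ((κ₁ : ℂ) * ((α₁ ^ 4 / 12 : ℝ) : ℂ)) * (Complex.I * t₁)) / ((α₁ : ℂ) * chi t₁))
        ((α₁ : ℂ) * chi t₁) := rfl

lemma residTail_neg (P₀ P₁ : ℂ) (L : ℝ) (a b c d : ℂ) :
    residTail P₀ P₁ L (-a) (-b) (-c) (-d) = residTail P₀ P₁ L a b c d := by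
  unfold residTail
  rw [show (5 * (-a + -d) + 39 * (-b + -c)) / 52 =
      -((5 * (a + d) + 39 * (b + c)) / 52) from by ring]
  rw [show (40 * ((-a) ^ 2 + (-d) ^ 2) + 49 * (-a * -b + -c * -d) +
      62 * ((-b) ^ 2 + (-c) ^ 2) + -a * -c + -b * -d + 28 * (-b) * (-c) -
      560 * (P₁ - P₀)) =
      (40 * (a ^ 2 + d ^ 2) + 49 * (a * b + c * d) +
      62 * (b ^ 2 + c ^ 2) + a * c + b * d + 28 * b * c -
      560 * (P₁ - P₀)) from by ring]
  rw [show (49 * (-a * starRingEnd ℂ (-b)) + 49 * (-c * starRingEnd ℂ (-d)) +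
        28 * (-b * starRingEnd ℂ (-c)) + -a * starRingEnd ℂ (-c) +
        -b * starRingEnd ℂ (-d)) =
      (49 * (a * starRingEnd ℂ b) + 49 * (c * starRingEnd ℂ d) +
        28 * (b * starRingEnd ℂ c) + a * starRingEnd ℂ c +
        b * starRingEnd ℂ d) from by simp only [map_neg]; ring]
  simp only [map_neg, neg_sq, norm_neg]

/-- With `β₀ = β₁ = 0` and `α₁ = ±λα₀`, the length-constraint residual is an even function
of `α₀`, and its value at `α₀ = 0` is `(140/13)(|P₁ − P₀| − L)`. -/
theorem stmt12 (P₀ P₁ t₀ t₁ : ℂ) (κ₀ κ₁ L lam : ℝ)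
    (ht₀ : ‖t₀‖ = 1) (ht₁ : ‖t₁‖ = 1)
    (hchi₀ : 0 < ‖t₀‖ + t₀.re) (hchi₁ : 0 < ‖t₁‖ + t₁.re)
    (hlam : 0 < lam) (s : ℝ) (hs : s = 1 ∨ s = -1) :
    (∀ α₀ : ℝ,
      lengthResidual P₀ P₁ t₀ t₁ κ₀ κ₁ L (-α₀) (s * lam * (-α₀)) 0 0 =
        lengthResidual P₀ P₁ t₀ t₁ κ₀ κ₁ L α₀ (s * lam * α₀) 0 0) ∧
    lengthResidual P₀ P₁ t₀ t₁ κ₀ κ₁ L 0 0 0 0 =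
      (140 / 13) * (‖P₁ - P₀‖ - L) := by
  constructor
  · intro α₀
    rw [lengthResidual_eq_tail, lengthResidual_eq_tail]
    have h0 : ((-α₀ : ℝ) : ℂ) * chi t₀ = -((α₀ : ℝ) * chi t₀) := by push_cast; ring
    have h3 : ((s * lam * (-α₀) : ℝ) : ℂ) * chi t₁ =
        -(((s * lam * α₀ : ℝ) : ℂ) * chi t₁) := by push_cast; ring
    have h1 : ((((-α₀) ^ 2 + (0:ℝ) / 12 : ℝ) : ℂ) * t₀ +
        ((κ₀ : ℂ) * (((-α₀) ^ 4 / 12 : ℝ) : ℂ)) * (Complex.I * t₀)) /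
          (((-α₀ : ℝ)) * chi t₀) =
        -(((((α₀) ^ 2 + (0:ℝ) / 12 : ℝ) : ℂ) * t₀ +
          ((κ₀ : ℂ) * (((α₀) ^ 4 / 12 : ℝ) : ℂ)) * (Complex.I * t₀)) /
            (((α₀ : ℝ)) * chi t₀)) := by
      rw [h0, div_neg]
      congr 3 <;> push_cast <;> ring
    have h2 : ((((s * lam * (-α₀)) ^ 2 - (0:ℝ) / 12 : ℝ) : ℂ) * t₁ -
        ((κ₁ : ℂ) * (((s * lam * (-α₀)) ^ 4 / 12 : ℝ) : ℂ)) * (Complex.I * t₁)) /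
          (((s * lam * (-α₀) : ℝ) : ℂ) * chi t₁) =
        -(((((s * lam * α₀) ^ 2 - (0:ℝ) / 12 : ℝ) : ℂ) * t₁ -
          ((κ₁ : ℂ) * (((s * lam * α₀) ^ 4 / 12 : ℝ) : ℂ)) * (Complex.I * t₁)) /
            (((s * lam * α₀ : ℝ) : ℂ) * chi t₁)) := by
      rw [h3, div_neg]
      congr 3 <;> push_cast <;> ring
    rw [h1, h2, h0, h3, residTail_neg]
  · rw [lengthResidual_eq_tail]
    unfold residTail
    simp only [Complex.ofReal_zero, zero_mul, div_zero]
    simp only [mul_zero, zero_pow, zero_add, add_zero, map_zero, ne_eq, OfNat.ofNat_ne_zero,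
      not_false_eq_true, zero_div, zero_mul, zero_sub, zero_pow]
    rw [show (-(-(560 * (P₁ - P₀)) / 52) : ℂ) = (560/52) * (P₁ - P₀) from by ring]
    rw [norm_mul]
    rw [show ‖(560/52 : ℂ)‖ = 560/52 from by
      rw [show (560/52 : ℂ) = ((560/52 : ℝ) : ℂ) from by norm_num]
      rw [Complex.norm_real]; norm_num]
    simp [Complex.zero_re]
    ring
end

section
/- For any prescribed length L > |P₁ − P₀| and any λ > 0, with β₀ = β₁ = 0, there exists at least one α₀ > 0 such that the length-constraint equation e(α₀, λα₀, 0, 0) = 0 holds, and at least one α₀ > 0 such that e(α₀, −λα₀, 0, 0) = 0; i.e., the G² PH biarc interpolant of degree 7 with the prescribed arc length exists for any admissible data. -/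
open Complex

lemma chi_sq (c : ℂ) (h : 0 < ‖c‖ + c.re) : chi c ^ 2 = c := by
  have hs0 : 0 < Real.sqrt (‖c‖ + c.re) := Real.sqrt_pos.2 h
  have hs2 : (Real.sqrt (‖c‖ + c.re)) ^ 2 = ‖c‖ + c.re := Real.sq_sqrt h.le
  have habs : (‖c‖) ^ 2 = c.re ^ 2 + c.im ^ 2 := by
    rw [Complex.sq_norm, Complex.normSq_apply]; ring
  have hsne : ((Real.sqrt (‖c‖ + c.re) : ℝ) : ℂ) ≠ 0 := by
    exact_mod_cast hs0.ne'
  have h2 : ((Real.sqrt 2 : ℝ) : ℂ) ^ 2 = 2 := by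
    norm_cast
    rw [Real.sq_sqrt] <;> norm_num
  have e1 : ((Real.sqrt (‖c‖ + c.re) : ℝ) : ℂ) ^ 2
      = ((‖c‖ : ℝ) : ℂ) + (c.re : ℂ) := by
    exact_mod_cast congrArg (Complex.ofReal) hs2
  have e3 : ((‖c‖ : ℝ) : ℂ) ^ 2 = (c.re : ℂ) ^ 2 + (c.im : ℂ) ^ 2 := by
    exact_mod_cast congrArg (Complex.ofReal) habs
  have hc : c = (c.re : ℂ) + (c.im : ℂ) * I := (Complex.re_add_im c).symm
  unfold chi
  push_cast
  field_simp
  linear_combination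
    ((((Real.sqrt (‖c‖ + c.re) : ℝ) : ℂ)) ^ 2 + I * (c.im : ℂ)) ^ 2 * h2
    + 2 * (c.im : ℂ) ^ 2 * Complex.I_sq
    + (2 * ((Real.sqrt (‖c‖ + c.re) : ℝ) : ℂ) ^ 2
      + 2 * (((‖c‖ : ℝ) : ℂ) + (c.re : ℂ)) + 4 * (c.im : ℂ) * I - 4 * c) * e1
    + 2 * e3 - 4 * (((‖c‖ : ℝ) : ℂ) + (c.re : ℂ)) * hc

lemma chi_norm (c : ℂ) (hc : ‖c‖ = 1) (h : 0 < ‖c‖ + c.re) :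
    (chi c).re ^ 2 + (chi c).im ^ 2 = 1 := by
  have h1 : ‖chi c‖ ^ 2 = 1 := by
    have := congrArg norm (chi_sq c h)
    rw [norm_pow, hc] at this
    exact this
  rw [Complex.sq_norm, Complex.normSq_apply] at h1
  linarith [h1]

/-- residual as a function of the four preimage control points -/
noncomputable def res (wA0 wA1 wB2 wB3 P₀ P₁ : ℂ) (L : ℝ) : ℝ :=
  ‖((5 * (wA0 + wB3) + 39 * (wA1 + wB2)) / 52) ^ 2 -
      (40 * (wA0 ^ 2 + wB3 ^ 2) + 49 * (wA0 * wA1 + wB2 * wB3) +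
      62 * (wA1 ^ 2 + wB2 ^ 2) + wA0 * wB2 + wA1 * wB3 + 28 * wA1 * wB2 -
      560 * (P₁ - P₀)) / 52‖ -
    ‖(5 * (wA0 + wB3) + 39 * (wA1 + wB2)) / 52‖ ^ 2 +
    (40 * ‖wA0‖ ^ 2 + 40 * ‖wB3‖ ^ 2 +
      62 * ‖wA1‖ ^ 2 + 62 * ‖wB2‖ ^ 2 +
      (49 * (wA0 * starRingEnd ℂ wA1) + 49 * (wB2 * starRingEnd ℂ wB3) +
        28 * (wA1 * starRingEnd ℂ wB2) + wA0 * starRingEnd ℂ wB2 +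
        wA1 * starRingEnd ℂ wB3).re - 560 * L) / 52

lemma lengthResidual_eq_res (P₀ P₁ t₀ t₁ : ℂ) (κ₀ κ₁ L α₀ α₁ β₀ β₁ : ℝ) :
    lengthResidual P₀ P₁ t₀ t₁ κ₀ κ₁ L α₀ α₁ β₀ β₁ =
    res ((α₀ : ℂ) * chi t₀)
      ((((α₀ ^ 2 + β₀ / 12 : ℝ) : ℂ) * t₀ +
        ((κ₀ : ℂ) * ((α₀ ^ 4 / 12 : ℝ) : ℂ)) * (Complex.I * t₀)) / ((α₀ : ℂ) * chi t₀))
      ((((α₁ ^ 2 - β₁ / 12 : ℝ) : ℂ) * t₁ -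
        ((κ₁ : ℂ) * ((α₁ ^ 4 / 12 : ℝ) : ℂ)) * (Complex.I * t₁)) / ((α₁ : ℂ) * chi t₁))
      ((α₁ : ℂ) * chi t₁) P₀ P₁ L := rfl

lemma quot_A (t₀ : ℂ) (κ₀ α : ℝ) (hα : (α : ℂ) ≠ 0) (ha : chi t₀ ≠ 0)
    (ha2 : chi t₀ ^ 2 = t₀) :
    (((α ^ 2 + 0 / 12 : ℝ) : ℂ) * t₀ +
        ((κ₀ : ℂ) * ((α ^ 4 / 12 : ℝ) : ℂ)) * (Complex.I * t₀)) / ((α : ℂ) * chi t₀)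
      = (α : ℂ) * chi t₀ * (1 + Complex.I * ((κ₀ * α ^ 2 / 12 : ℝ) : ℂ)) := by
  set a := chi t₀ with hadef
  rw [← ha2]
  push_cast
  field_simp
  ring

lemma quot_B (t₁ : ℂ) (κ₁ s : ℝ) (hs : (s : ℂ) ≠ 0) (hb : chi t₁ ≠ 0)
    (hb2 : chi t₁ ^ 2 = t₁) :
    (((s ^ 2 - 0 / 12 : ℝ) : ℂ) * t₁ -
        ((κ₁ : ℂ) * ((s ^ 4 / 12 : ℝ) : ℂ)) * (Complex.I * t₁)) / ((s : ℂ) * chi t₁)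
      = (s : ℂ) * chi t₁ * (1 - Complex.I * ((κ₁ * s ^ 2 / 12 : ℝ) : ℂ)) := by
  set b := chi t₁ with hbdef
  rw [← hb2]
  push_cast
  field_simp
  ring

lemma res_ge (wA0 wA1 wB2 wB3 P₀ P₁ : ℂ) (L : ℝ) :
    (40 * ‖wA0‖ ^ 2 + 40 * ‖wB3‖ ^ 2 +
      62 * ‖wA1‖ ^ 2 + 62 * ‖wB2‖ ^ 2 +
      (49 * (wA0 * starRingEnd ℂ wA1) + 49 * (wB2 * starRingEnd ℂ wB3) +
        28 * (wA1 * starRingEnd ℂ wB2) + wA0 * starRingEnd ℂ wB2 +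
        wA1 * starRingEnd ℂ wB3).re - 560 * L) / 52 -
    ‖(5 * (wA0 + wB3) + 39 * (wA1 + wB2)) / 52‖ ^ 2
      ≤ res wA0 wA1 wB2 wB3 P₀ P₁ L := by
  unfold res
  have := norm_nonneg (((5 * (wA0 + wB3) + 39 * (wA1 + wB2)) / 52) ^ 2 -
      (40 * (wA0 ^ 2 + wB3 ^ 2) + 49 * (wA0 * wA1 + wB2 * wB3) +
      62 * (wA1 ^ 2 + wB2 ^ 2) + wA0 * wB2 + wA1 * wB3 + 28 * wA1 * wB2 -
      560 * (P₁ - P₀)) / 52)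
  linarith

set_option maxHeartbeats 1000000 in
lemma vU_lower (a b : ℂ) (L α s m n : ℝ)
    (ha : a.re ^ 2 + a.im ^ 2 = 1) (hb : b.re ^ 2 + b.im ^ 2 = 1) :
    (3743 * (α ^ 2 + s ^ 2) - 29120 * L) / 2704 ≤
    (40 * ‖(α : ℂ) * a‖ ^ 2 + 40 * ‖(s : ℂ) * b‖ ^ 2 +
      62 * ‖(α : ℂ) * a * (1 + Complex.I * (m : ℂ))‖ ^ 2 +
      62 * ‖(s : ℂ) * b * (1 - Complex.I * (n : ℂ))‖ ^ 2 +
      (49 * (((α : ℂ) * a) * starRingEnd ℂ ((α : ℂ) * a * (1 + Complex.I * (m : ℂ)))) +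
       49 * (((s : ℂ) * b * (1 - Complex.I * (n : ℂ))) * starRingEnd ℂ ((s : ℂ) * b)) +
       28 * (((α : ℂ) * a * (1 + Complex.I * (m : ℂ))) * starRingEnd ℂ ((s : ℂ) * b * (1 - Complex.I * (n : ℂ)))) +
       ((α : ℂ) * a) * starRingEnd ℂ ((s : ℂ) * b * (1 - Complex.I * (n : ℂ))) +
       ((α : ℂ) * a * (1 + Complex.I * (m : ℂ))) * starRingEnd ℂ ((s : ℂ) * b)).re - 560 * L) / 52 -
    ‖(5 * (((α : ℂ) * a) + ((s : ℂ) * b)) +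
      39 * (((α : ℂ) * a * (1 + Complex.I * (m : ℂ))) + ((s : ℂ) * b * (1 - Complex.I * (n : ℂ))))) / 52‖ ^ 2 := by
  have hcd : (a.re * b.re + a.im * b.im) ^ 2 + (a.im * b.re - a.re * b.im) ^ 2 = 1 := by
    linear_combination (b.re ^ 2 + b.im ^ 2) * ha + hb
  have hc1 : 0 ≤ 1 + (a.re * b.re + a.im * b.im) := by
    nlinarith [sq_nonneg (1 + (a.re * b.re + a.im * b.im)), sq_nonneg (a.im * b.re - a.re * b.im)]
  have hc2 : 0 ≤ 1 - (a.re * b.re + a.im * b.im) := by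
    nlinarith [sq_nonneg (1 - (a.re * b.re + a.im * b.im)), sq_nonneg (a.im * b.re - a.re * b.im)]
  have hd1 : 0 ≤ 1 - (a.im * b.re - a.re * b.im) ^ 2 := by
    nlinarith [sq_nonneg (a.re * b.re + a.im * b.im)]
  have hc3 : 0 ≤ 1 - (a.re * b.re + a.im * b.im) ^ 2 := by
    nlinarith [sq_nonneg (a.im * b.re - a.re * b.im)]
  have k1 : (0:ℝ) ≤ (1 + (a.re * b.re + a.im * b.im)) * (α * m + s * n) ^ 2 := mul_nonneg hc1 (sq_nonneg _)
  have k2 : (0:ℝ) ≤ (1 - (a.re * b.re + a.im * b.im)) * (α * m - s * n) ^ 2 := mul_nonneg hc2 (sq_nonneg _)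
  have k3 : (0:ℝ) ≤ (910 * (α * m) + 962 * (s * (a.im * b.re - a.re * b.im))) ^ 2 := sq_nonneg _
  have k4 : (0:ℝ) ≤ (910 * (s * n) + 962 * (α * (a.im * b.re - a.re * b.im))) ^ 2 := sq_nonneg _
  have k5 : (0:ℝ) ≤ s ^ 2 * (1 - (a.im * b.re - a.re * b.im) ^ 2) := mul_nonneg (sq_nonneg s) hd1
  have k6 : (0:ℝ) ≤ α ^ 2 * (1 - (a.im * b.re - a.re * b.im) ^ 2) := mul_nonneg (sq_nonneg α) hd1
  have k7 : (0:ℝ) ≤ (α - s * (a.re * b.re + a.im * b.im)) ^ 2 := sq_nonneg _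
  have k8 : (0:ℝ) ≤ s ^ 2 * (1 - (a.re * b.re + a.im * b.im) ^ 2) := mul_nonneg (sq_nonneg s) hc3
  have q1 : α ^ 2 * a.re ^ 2 + α ^ 2 * a.im ^ 2 = α ^ 2 := by linear_combination α ^ 2 * ha
  have q2 : (α * m) ^ 2 * a.re ^ 2 + (α * m) ^ 2 * a.im ^ 2 = (α * m) ^ 2 := by
    linear_combination (α * m) ^ 2 * ha
  have q3 : s ^ 2 * b.re ^ 2 + s ^ 2 * b.im ^ 2 = s ^ 2 := by linear_combination s ^ 2 * hb
  have q4 : (s * n) ^ 2 * b.re ^ 2 + (s * n) ^ 2 * b.im ^ 2 = (s * n) ^ 2 := by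
    linear_combination (s * n) ^ 2 * hb
  simp only [Complex.sq_norm, Complex.normSq_div]
  simp only [Complex.normSq_apply, Complex.add_re, Complex.add_im, Complex.mul_re,
    Complex.mul_im, Complex.sub_re, Complex.sub_im, Complex.one_re, Complex.one_im,
    Complex.I_re, Complex.I_im, Complex.ofReal_re, Complex.ofReal_im,
    Complex.re_ofNat, Complex.im_ofNat, map_mul, map_one, map_sub, map_add,
    Complex.conj_I, Complex.conj_ofReal, Complex.conj_re, Complex.conj_im,
    Complex.neg_re, Complex.neg_im, neg_zero, neg_neg, mul_zero, zero_mul, mul_one, one_mul,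
    add_zero, zero_add, sub_zero, zero_sub, mul_neg, neg_mul]
  ring_nf
  linarith [k1, k2, k3, k4, k5, k6, k7, k8, q1, q2, q3, q4, sq_nonneg α, sq_nonneg s]

attribute [local fun_prop] Complex.continuous_conj

lemma res_cont (a b P₀ P₁ : ℂ) (L e1 c1 c2 : ℝ) :
    Continuous (fun α : ℝ => res ((α : ℂ) * a)
      ((α : ℂ) * a * (1 + Complex.I * ((c1 * α ^ 2 / 12 : ℝ) : ℂ)))
      (((e1 * α : ℝ) : ℂ) * b * (1 - Complex.I * ((c2 * (e1 * α) ^ 2 / 12 : ℝ) : ℂ)))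
      (((e1 * α : ℝ) : ℂ) * b) P₀ P₁ L) := by
  unfold res
  fun_prop

lemma res_zero (P₀ P₁ : ℂ) (L : ℝ) (hL : ‖P₁ - P₀‖ < L) :
    res 0 0 0 0 P₀ P₁ L < 0 := by
  unfold res
  simp only [mul_zero, zero_mul, map_zero, zero_add, add_zero, zero_pow, ne_eq,
    OfNat.ofNat_ne_zero, not_false_eq_true, mul_one, one_mul, zero_sub, zero_div, map_zero]
  norm_num
  linarith

lemma main_exists (P₀ P₁ t₀ t₁ : ℂ) (κ₀ κ₁ L lam eps : ℝ)
    (ht₀ : ‖t₀‖ = 1) (ht₁ : ‖t₁‖ = 1)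
    (hchi₀ : 0 < ‖t₀‖ + t₀.re) (hchi₁ : 0 < ‖t₁‖ + t₁.re)
    (hL : ‖P₁ - P₀‖ < L) (hlam : 0 < lam) (heps : eps ≠ 0) :
    ∃ α₀ : ℝ, 0 < α₀ ∧
      lengthResidual P₀ P₁ t₀ t₁ κ₀ κ₁ L α₀ (eps * lam * α₀) 0 0 = 0 := by
  have hLpos : 0 < L := lt_of_le_of_lt (norm_nonneg _) hL
  have ha2 : chi t₀ ^ 2 = t₀ := chi_sq t₀ hchi₀
  have hb2 : chi t₁ ^ 2 = t₁ := chi_sq t₁ hchi₁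
  have hare : (chi t₀).re ^ 2 + (chi t₀).im ^ 2 = 1 := chi_norm t₀ ht₀ hchi₀
  have hbre : (chi t₁).re ^ 2 + (chi t₁).im ^ 2 = 1 := chi_norm t₁ ht₁ hchi₁
  have ha0 : chi t₀ ≠ 0 := by
    intro h; rw [h] at hare; simp at hare
  have hb0 : chi t₁ ≠ 0 := by
    intro h; rw [h] at hbre; simp at hbre
  set g : ℝ → ℝ := fun α => res ((α : ℂ) * chi t₀)
      ((α : ℂ) * chi t₀ * (1 + Complex.I * ((κ₀ * α ^ 2 / 12 : ℝ) : ℂ)))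
      (((eps * lam * α : ℝ) : ℂ) * chi t₁ *
        (1 - Complex.I * ((κ₁ * (eps * lam * α) ^ 2 / 12 : ℝ) : ℂ)))
      (((eps * lam * α : ℝ) : ℂ) * chi t₁) P₀ P₁ L with hgdef
  have hfg : ∀ α : ℝ, 0 < α →
      lengthResidual P₀ P₁ t₀ t₁ κ₀ κ₁ L α (eps * lam * α) 0 0 = g α := by
    intro α hα
    have hαne : (α : ℂ) ≠ 0 := by exact_mod_cast hα.ne'
    have hsne : ((eps * lam * α : ℝ) : ℂ) ≠ 0 := by
      have : eps * lam * α ≠ 0 := by positivity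
      exact_mod_cast this
    rw [lengthResidual_eq_res, quot_A t₀ κ₀ α hαne ha0 ha2,
      quot_B t₁ κ₁ (eps * lam * α) hsne hb0 hb2]
  have hcont : Continuous g := by
    rw [hgdef]
    exact res_cont (chi t₀) (chi t₁) P₀ P₁ L (eps * lam) κ₀ κ₁
  have hg0 : g 0 < 0 := by
    have h0 : g 0 = res 0 0 0 0 P₀ P₁ L := by
      rw [hgdef]
      norm_num
    rw [h0]
    exact res_zero P₀ P₁ L hL
  have hev : ∀ᶠ α in nhdsWithin 0 (Set.Ioi (0:ℝ)), g α < 0 :=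
    (((hcont.tendsto 0).mono_left nhdsWithin_le_nhds).eventually_lt_const hg0)
  obtain ⟨α₁, hα₁neg, hα₁pos⟩ := (hev.and eventually_mem_nhdsWithin).exists
  set α₂ : ℝ := max (α₁ + 1) (Real.sqrt (29120 * L / 3743) + 1) with hα₂def
  have hα₁α₂ : α₁ < α₂ := lt_of_lt_of_le (lt_add_one α₁) (le_max_left _ _)
  have hg2 : 0 < g α₂ := by
    have hle := (vU_lower (chi t₀) (chi t₁) L α₂ (eps * lam * α₂)
        (κ₀ * α₂ ^ 2 / 12) (κ₁ * (eps * lam * α₂) ^ 2 / 12) hare hbre).trans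
      (res_ge ((α₂ : ℂ) * chi t₀)
        ((α₂ : ℂ) * chi t₀ * (1 + Complex.I * ((κ₀ * α₂ ^ 2 / 12 : ℝ) : ℂ)))
        (((eps * lam * α₂ : ℝ) : ℂ) * chi t₁ *
          (1 - Complex.I * ((κ₁ * (eps * lam * α₂) ^ 2 / 12 : ℝ) : ℂ)))
        (((eps * lam * α₂ : ℝ) : ℂ) * chi t₁) P₀ P₁ L)
    have hX : (0:ℝ) ≤ 29120 * L / 3743 := by positivity
    have hs : Real.sqrt (29120 * L / 3743) ^ 2 = 29120 * L / 3743 := Real.sq_sqrt hX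
    have hsn : 0 ≤ Real.sqrt (29120 * L / 3743) := Real.sqrt_nonneg _
    have hα₂ge : Real.sqrt (29120 * L / 3743) + 1 ≤ α₂ := le_max_right _ _
    have hpos : 0 < (3743 * (α₂ ^ 2 + (eps * lam * α₂) ^ 2) - 29120 * L) / 2704 := by
      have h1 : 29120 * L / 3743 < α₂ ^ 2 := by nlinarith
      have h2 : (0:ℝ) ≤ (eps * lam * α₂) ^ 2 := sq_nonneg _
      rw [div_pos_iff]
      left
      constructor
      · nlinarith
      · norm_num
    calc (0:ℝ) < _ := hpos
      _ ≤ g α₂ := hle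
  have hivt := intermediate_value_Icc hα₁α₂.le hcont.continuousOn
  have h0mem : (0:ℝ) ∈ Set.Icc (g α₁) (g α₂) := ⟨hα₁neg.le, hg2.le⟩
  obtain ⟨x, hx, hgx⟩ := hivt h0mem
  refine ⟨x, lt_of_lt_of_le hα₁pos hx.1, ?_⟩
  rw [hfg x (lt_of_lt_of_le hα₁pos hx.1)]
  exact hgx

/-- Theorem 2: for any prescribed length `L > |P₁ − P₀|` and any `λ > 0`, with
`β₀ = β₁ = 0`, there exists a positive `α₀` solving the length equation along
`α₁ = λα₀`, and a positive `α₀` solving it along `α₁ = −λα₀`. -/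
theorem stmt13 (P₀ P₁ t₀ t₁ : ℂ) (κ₀ κ₁ L lam : ℝ)
    (ht₀ : ‖t₀‖ = 1) (ht₁ : ‖t₁‖ = 1)
    (hchi₀ : 0 < ‖t₀‖ + t₀.re) (hchi₁ : 0 < ‖t₁‖ + t₁.re)
    (hL : ‖P₁ - P₀‖ < L) (hlam : 0 < lam) :
    (∃ α₀ : ℝ, 0 < α₀ ∧
      lengthResidual P₀ P₁ t₀ t₁ κ₀ κ₁ L α₀ (lam * α₀) 0 0 = 0) ∧
    (∃ α₀ : ℝ, 0 < α₀ ∧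
      lengthResidual P₀ P₁ t₀ t₁ κ₀ κ₁ L α₀ (-(lam * α₀)) 0 0 = 0) := by
  constructor
  · obtain ⟨α₀, hpos, hres⟩ := main_exists P₀ P₁ t₀ t₁ κ₀ κ₁ L lam 1
      ht₀ ht₁ hchi₀ hchi₁ hL hlam one_ne_zero
    refine ⟨α₀, hpos, ?_⟩
    rw [show lam * α₀ = 1 * lam * α₀ by ring]
    exact hres
  · obtain ⟨α₀, hpos, hres⟩ := main_exists P₀ P₁ t₀ t₁ κ₀ κ₁ L lam (-1)
      ht₀ ht₁ hchi₀ hchi₁ hL hlam (by norm_num)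
    refine ⟨α₀, hpos, ?_⟩
    rw [show -(lam * α₀) = -1 * lam * α₀ by ring]
    exact hres
end

section
/- If the piecewise preimage w (built from w_A and w_B over halved intervals) is C² at the joint and the two integrated PH segments r_A, r_B agree in position at the joint (r_A(1/2) = r_B(1/2)), then the biarc curve r defined piecewise by r_A and r_B is C³ at t = 1/2. -/
open Polynomial Complex

private lemma deriv_poly_eval (p : Polynomial ℂ) :
    (deriv fun t : ℝ => p.eval (t : ℂ)) = fun t : ℝ => (Polynomial.derivative p).eval (t : ℂ) :=
  funext fun t => ((p.hasDerivAt (t : ℂ)).comp_ofReal).deriv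

/-- If the piecewise preimage built from `w_A, w_B` over halved intervals is `C²` at the
joint and the integrated PH segments agree in position there, then the biarc is `C³` at
`t = 1/2`: the values and first three derivatives of `r_A` and `r_B` agree at `1/2`. -/
theorem stmt16 (wA wB : Polynomial ℂ) (rA rB : ℝ → ℂ)
    (hA : ∀ t : ℝ, HasDerivAt rA ((wA.eval ((2 * t : ℝ) : ℂ)) ^ 2) t)
    (hB : ∀ t : ℝ, HasDerivAt rB ((wB.eval ((2 * t - 1 : ℝ) : ℂ)) ^ 2) t)
    (hw0 : wA.eval 1 = wB.eval 0)
    (hw1 : (Polynomial.derivative wA).eval 1 = (Polynomial.derivative wB).eval 0)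
    (hw2 : (Polynomial.derivative (Polynomial.derivative wA)).eval 1 =
      (Polynomial.derivative (Polynomial.derivative wB)).eval 0)
    (hjoin : rA (1/2) = rB (1/2)) :
    ∀ k ≤ 3, iteratedDeriv k rA (1/2) = iteratedDeriv k rB (1/2) := by
  set qA : Polynomial ℂ := (wA ^ 2).comp (Polynomial.C 2 * Polynomial.X) with hqAdef
  set qB : Polynomial ℂ := (wB ^ 2).comp (Polynomial.C 2 * Polynomial.X - Polynomial.C 1) with hqBdef
  have hdA : deriv rA = fun t : ℝ => qA.eval (t : ℂ) := by
    funext t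
    rw [(hA t).deriv, hqAdef]
    push_cast
    simp [Polynomial.eval_comp]
  have hdB : deriv rB = fun t : ℝ => qB.eval (t : ℂ) := by
    funext t
    rw [(hB t).deriv, hqBdef]
    push_cast
    simp [Polynomial.eval_comp]
  intro k hk
  interval_cases k
  · simpa using hjoin
  · simp only [iteratedDeriv_one]
    rw [hdA, hdB]
    simp only [hqAdef, hqBdef, Polynomial.eval_comp]
    push_cast
    norm_num [hw0]
  · simp only [show (2:ℕ) = 1 + 1 from rfl, iteratedDeriv_succ, iteratedDeriv_zero]
    rw [hdA, hdB, deriv_poly_eval, deriv_poly_eval]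
    simp only [hqAdef, hqBdef, Polynomial.derivative_comp, Polynomial.eval_comp,
      Polynomial.eval_mul, Polynomial.derivative_mul, Polynomial.derivative_C,
      Polynomial.derivative_X, Polynomial.derivative_sub, Polynomial.derivative_pow,
      Polynomial.eval_C, Polynomial.eval_X, Polynomial.eval_sub, Polynomial.eval_pow,
      Polynomial.eval_natCast]
    push_cast
    norm_num [hw0, hw1]
  · simp only [show (3:ℕ) = 1 + 1 + 1 from rfl, iteratedDeriv_succ, iteratedDeriv_zero]
    rw [hdA, hdB, deriv_poly_eval, deriv_poly_eval, deriv_poly_eval, deriv_poly_eval]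
    simp only [hqAdef, hqBdef, Polynomial.derivative_comp, Polynomial.eval_comp,
      Polynomial.eval_mul, Polynomial.derivative_mul, Polynomial.derivative_C,
      Polynomial.derivative_X, Polynomial.derivative_sub, Polynomial.derivative_pow,
      Polynomial.eval_C, Polynomial.eval_X, Polynomial.eval_sub, Polynomial.eval_pow,
      Polynomial.eval_natCast]
    push_cast
    norm_num [hw0, hw1, hw2]
end

section
/- Let r(t) be a degree-7 Bézier curve with control points p₀,...,p₇ given by p₀ = P₀, p₁ = P₀ + (α₀²/7)t₀, p₂ = P₀ + (2α₀²/7 + β₀/42)t₀ + κ₀(α₀⁴/42)n₀, where t₀ is a unit vector and n₀ = i·t₀. Then r(0) = P₀, r'(0) = α₀²t₀ (so the unit tangent at 0 is t₀ when α₀ ≠ 0), and the signed curvature of r at t = 0 equals κ₀. -/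
open Polynomial Complex

/-- For a degree-7 Bézier curve with `p₀ = P₀`, `p₁ = P₀ + (α₀²/7)t₀`,
`p₂ = P₀ + (2α₀²/7 + β₀/42)t₀ + κ₀(α₀⁴/42)n₀` (with `t₀` a unit vector, `n₀ = i t₀`,
`α₀ ≠ 0`), one has `r(0) = P₀`, `r'(0) = α₀²t₀` (so the unit tangent at `0` is `t₀`),
and the signed curvature at `t = 0` equals `κ₀`. -/
theorem stmt17 (p : ℕ → ℂ) (P₀ t₀ : ℂ) (α₀ β₀ κ₀ : ℝ)
    (ht₀ : ‖t₀‖ = 1) (hα₀ : α₀ ≠ 0)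
    (hp0 : p 0 = P₀)
    (hp1 : p 1 = P₀ + ((α₀ ^ 2 / 7 : ℝ) : ℂ) * t₀)
    (hp2 : p 2 = P₀ + ((2 * α₀ ^ 2 / 7 + β₀ / 42 : ℝ) : ℂ) * t₀ +
      ((κ₀ : ℂ) * ((α₀ ^ 4 / 42 : ℝ) : ℂ)) * (Complex.I * t₀)) :
    let r : ℝ → ℂ := fun t =>
      ∑ i ∈ Finset.range 8, p i * (((bernsteinPolynomial ℝ 7 i).eval t : ℝ) : ℂ)
    r 0 = P₀ ∧
    deriv r 0 = ((α₀ ^ 2 : ℝ) : ℂ) * t₀ ∧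
    deriv r 0 / ((‖deriv r 0‖ : ℝ) : ℂ) = t₀ ∧
    (starRingEnd ℂ (deriv r 0) * deriv (deriv r) 0).im / (‖deriv r 0‖) ^ 3 =
      κ₀ := by
  intro r
  have hb : ∀ t : ℝ, HasDerivAt r
      (∑ i ∈ Finset.range 8, p i * (((derivative (bernsteinPolynomial ℝ 7 i)).eval t : ℝ) : ℂ)) t := by
    intro t
    exact HasDerivAt.fun_sum fun i _ =>
      ((Polynomial.hasDerivAt _ t).ofReal_comp).const_mul (p i)
  have hr1 : deriv r = fun t =>
      ∑ i ∈ Finset.range 8, p i * (((derivative (bernsteinPolynomial ℝ 7 i)).eval t : ℝ) : ℂ) :=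
    funext fun t => (hb t).deriv
  have hb2 : ∀ t : ℝ, HasDerivAt (deriv r)
      (∑ i ∈ Finset.range 8, p i * (((derivative (derivative (bernsteinPolynomial ℝ 7 i))).eval t : ℝ) : ℂ)) t := by
    intro t
    rw [hr1]
    exact HasDerivAt.fun_sum fun i _ =>
      ((Polynomial.hasDerivAt _ t).ofReal_comp).const_mul (p i)
  have hr0 : r 0 = P₀ := by
    show (∑ i ∈ Finset.range 8, p i * (((bernsteinPolynomial ℝ 7 i).eval (0:ℝ) : ℝ) : ℂ)) = P₀
    simp [Finset.sum_range_succ, bernsteinPolynomial.eval_at_0, hp0]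
  have hd1 : deriv r 0 = ((α₀ ^ 2 : ℝ) : ℂ) * t₀ := by
    rw [hr1]
    show (∑ i ∈ Finset.range 8, p i * (((derivative (bernsteinPolynomial ℝ 7 i)).eval (0:ℝ) : ℝ) : ℂ)) = _
    have h0 := bernsteinPolynomial.derivative_zero ℝ 7
    have hs : ∀ ν, derivative (bernsteinPolynomial ℝ 7 (ν + 1)) =
        7 * (bernsteinPolynomial ℝ 6 ν - bernsteinPolynomial ℝ 6 (ν + 1)) := by
      intro ν; simpa using bernsteinPolynomial.derivative_succ ℝ 7 ν
    simp only [Finset.sum_range_succ, Finset.sum_range_zero, h0, hs,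
      Polynomial.eval_mul, Polynomial.eval_sub, Polynomial.eval_neg, Polynomial.eval_natCast,
      bernsteinPolynomial.eval_at_0]
    norm_num [hp0, hp1]
    ring
  have hd2 : deriv (deriv r) 0 = (β₀ : ℂ) * t₀ + (κ₀ : ℂ) * (α₀ : ℂ) ^ 4 * Complex.I * t₀ := by
    rw [(hb2 0).deriv]
    have h0 := bernsteinPolynomial.derivative_zero ℝ 7
    have h0' := bernsteinPolynomial.derivative_zero ℝ 6
    have hs : ∀ ν, derivative (bernsteinPolynomial ℝ 7 (ν + 1)) =
        7 * (bernsteinPolynomial ℝ 6 ν - bernsteinPolynomial ℝ 6 (ν + 1)) := by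
      intro ν; simpa using bernsteinPolynomial.derivative_succ ℝ 7 ν
    have hs' : ∀ ν, derivative (bernsteinPolynomial ℝ 6 (ν + 1)) =
        6 * (bernsteinPolynomial ℝ 5 ν - bernsteinPolynomial ℝ 5 (ν + 1)) := by
      intro ν; simpa using bernsteinPolynomial.derivative_succ ℝ 6 ν
    simp only [Finset.sum_range_succ, Finset.sum_range_zero, h0, hs, derivative_mul,
      derivative_sub, derivative_neg, derivative_natCast, h0', hs',
      Polynomial.eval_mul, Polynomial.eval_sub, Polynomial.eval_neg, Polynomial.eval_add,
      Polynomial.eval_natCast, Polynomial.eval_zero, bernsteinPolynomial.eval_at_0]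
    norm_num [hp0, hp1, hp2]
    ring
  have hc : ((α₀ ^ 2 : ℝ) : ℂ) ≠ 0 := by
    exact_mod_cast pow_ne_zero 2 hα₀
  have habs : ‖(((α₀ ^ 2 : ℝ) : ℂ) * t₀)‖ = α₀ ^ 2 := by
    rw [norm_mul, Complex.norm_real, Real.norm_eq_abs, ht₀, mul_one, _root_.abs_of_nonneg (sq_nonneg α₀)]
  have hnt : (starRingEnd ℂ) t₀ * t₀ = 1 := by
    rw [mul_comm, Complex.mul_conj, Complex.normSq_eq_norm_sq, ht₀]
    norm_num
  refine ⟨hr0, hd1, ?_, ?_⟩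
  · rw [hd1, habs]
    exact mul_div_cancel_left₀ t₀ hc
  · rw [hd1, hd2, habs]
    have hprod : starRingEnd ℂ (((α₀ ^ 2 : ℝ) : ℂ) * t₀) *
        ((β₀ : ℂ) * t₀ + (κ₀ : ℂ) * (α₀ : ℂ) ^ 4 * Complex.I * t₀) =
        ((α₀ : ℂ)) ^ 2 * ((β₀ : ℂ) + (κ₀ : ℂ) * (α₀ : ℂ) ^ 4 * Complex.I) := by
      rw [map_mul, Complex.conj_ofReal]
      push_cast
      linear_combination ((α₀ : ℂ)) ^ 2 * ((β₀ : ℂ) + (κ₀ : ℂ) * (α₀ : ℂ) ^ 4 * Complex.I) * hnt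
    rw [hprod]
    have him : (((α₀ : ℂ)) ^ 2 * ((β₀ : ℂ) + (κ₀ : ℂ) * (α₀ : ℂ) ^ 4 * Complex.I)).im
        = α₀ ^ 2 * (κ₀ * α₀ ^ 4) := by
      have : ((α₀ : ℂ)) ^ 2 * ((β₀ : ℂ) + (κ₀ : ℂ) * (α₀ : ℂ) ^ 4 * Complex.I)
          = ((α₀ ^ 2 * β₀ : ℝ) : ℂ) + ((α₀ ^ 2 * (κ₀ * α₀ ^ 4) : ℝ) : ℂ) * Complex.I := by
        push_cast; ring
      rw [this]
      simp only [Complex.add_im, Complex.mul_I_im, Complex.ofReal_im, Complex.ofReal_re, zero_add]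
    rw [him]
    field_simp
end
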